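/- Every GML formula of modal depth n is logically equivalent over finite pointed Π-labeled graphs to an at most countable disjunction of full graded Π-types of modal depth n. -/

import Mathlib

/-- A finite directed node-labeled graph: finite node set `V`, out-neighbour
finsets `adj v`, and a labeling of nodes by sets of node label symbols from `α`. -/
structure LGraph (α : Type) : Type 1 where
  V : Type
  fintypeV : Fintype V
  adj : V → Finset V
  label : V → Set α

attribute [instance] LGraph.fintypeV

/-- Formulas of graded modal logic GML over node label symbols `α`:
`⊤`, labels, negation, conjunction, and graded diamonds `◇_{≥k}`. -/
inductive GML (α : Type) : Type where
  | top : GML α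
  | lab : α → GML α
  | neg : GML α → GML α
  | and : GML α → GML α → GML α
  | dia : ℕ → GML α → GML α

/-- Truth of a GML formula at a node of a labeled graph; `dia k φ` (`◇_{≥k}φ`)
holds iff at least `k` out-neighbours satisfy `φ`. -/
def GML.sat {α : Type} (G : LGraph α) : GML α → G.V → Prop
  | .top, _ => True
  | .lab p, v => p ∈ G.label v
  | .neg φ, v => ¬ GML.sat G φ v
  | .and φ ψ, v => GML.sat G φ v ∧ GML.sat G ψ v
  | .dia k φ, v => ∃ s : Finset G.V, s ⊆ G.adj v ∧ k ≤ s.card ∧ ∀ u ∈ s, GML.sat G φ u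

/-- `⊥` as a GML formula. -/
def GML.bot {α : Type} : GML α := .neg .top

/-- `□φ := ¬◇_{≥1}¬φ`. -/
def GML.box {α : Type} (φ : GML α) : GML α := .neg (.dia 1 (.neg φ))

/-- `◇_{=n}φ := ◇_{≥n}φ ∧ ¬◇_{≥n+1}φ`. -/
def GML.diaEq {α : Type} (n : ℕ) (φ : GML α) : GML α := .and (.dia n φ) (.neg (.dia (n + 1) φ))

/-- Schemata of GMSC over node label symbols `α` and head predicates (schema variables) `ν`. -/
inductive Schema (α ν : Type) : Type where
  | top : Schema α ν
  | lab : α → Schema α ν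
  | var : ν → Schema α ν
  | neg : Schema α ν → Schema α ν
  | and : Schema α ν → Schema α ν → Schema α ν
  | dia : ℕ → Schema α ν → Schema α ν

/-- Substituting a GML formula for each head predicate of a schema. -/
def Schema.subst {α ν : Type} (σ : ν → GML α) : Schema α ν → GML α
  | .top => .top
  | .lab p => .lab p
  | .var X => σ X
  | .neg φ => .neg (φ.subst σ)
  | .and φ ψ => .and (φ.subst σ) (ψ.subst σ)
  | .dia k φ => .dia k (φ.subst σ)

/-- A GMSC program over node label symbols `α` with head predicates `ν`:
terminal clauses `X(0) :− term X`, iteration clauses `X :− iter X`, and a set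
`app` of appointed predicates. -/
structure Program (α ν : Type) where
  term : ν → GML α
  iter : ν → Schema α ν
  app : Set ν

/-- The `n`-th iteration formula `Xⁿ` of a head predicate `X`: `X⁰` is the terminal body,
and `X^{n+1}` is the iteration body with each head predicate `Y` replaced by `Yⁿ`. -/
def Program.iterFormula {α ν : Type} (P : Program α ν) : ℕ → ν → GML α
  | 0 => P.term
  | n + 1 => fun X => (P.iter X).subst (P.iterFormula n)

/-- The program accepts `(G, w)` iff some appointed predicate's iteration formula is
true at `w` in some round. -/
def Program.accepts {α ν : Type} (P : Program α ν) (G : LGraph α) (w : G.V) : Prop :=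
  ∃ X ∈ P.app, ∃ n : ℕ, GML.sat G (P.iterFormula n X) w

/-- The modal depth of a GML formula: maximal nesting of graded diamonds. -/
def GML.mdepth {α : Type} : GML α → ℕ
  | .top => 0
  | .lab _ => 0
  | .neg φ => φ.mdepth
  | .and φ ψ => max φ.mdepth ψ.mdepth
  | .dia _ φ => φ.mdepth + 1

/-- Finite conjunction of a list of GML formulas. -/
def bigAnd {α : Type} : List (GML α) → GML α
  | [] => .top
  | φ :: l => .and φ (bigAnd l)

/-- The depth-0 part of a type as a GML formula: the conjunction over `p ∈ α` of `p` or `¬p`. -/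
noncomputable def baseFormula {α : Type} [Fintype α] [DecidableEq α] (t : α → Bool) : GML α :=
  bigAnd ((Finset.univ : Finset α).toList.map fun p =>
    if t p then GML.lab p else GML.neg (GML.lab p))

/-- Abstract data of a full graded `α`-type: at depth 0, which labels hold; at depth `n+1`,
the depth-0 data, a finitely supported function giving for each depth-`n` full type the exact
number of out-neighbours of that type, and the total number of out-neighbours. -/
def FullTD (α : Type) : ℕ → Type
  | 0 => α → Bool
  | n + 1 => (α → Bool) × (FullTD α n →₀ ℕ) × ℕ

/-- The GML formula of a full graded `α`-type of modal depth `n`: at depth `n+1`, the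
conjunction of the depth-0 type with the conjuncts `◇_{=ℓ}τ` for each depth-`n` full type `τ`
realized by exactly `ℓ ≥ 1` out-neighbours, together with `◇_{=m}⊤` where `m` is the total
number of out-neighbours. -/
noncomputable def FullTD.toFormula {α : Type} [Fintype α] [DecidableEq α] :
    ∀ {n : ℕ}, FullTD α n → GML α
  | 0, t => baseFormula t
  | n + 1, t =>
    GML.and (baseFormula t.1)
      (GML.and
        (bigAnd (t.2.1.support.toList.map fun τ =>
          GML.diaEq (t.2.1 τ) (FullTD.toFormula τ)))
        (GML.diaEq t.2.2 GML.top))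

open scoped Classical

section Aux

variable {α : Type} [Fintype α] [DecidableEq α]

instance FullTD.countable (n : ℕ) : Countable (FullTD α n) := by
  induction n with
  | zero => unfold FullTD; infer_instance
  | succ n ih => unfold FullTD; infer_instance

/-- The full type of a node. -/
noncomputable def typeOf : ∀ (n : ℕ) (G : LGraph α), G.V → FullTD α n
  | 0, G, w => fun p => decide (p ∈ G.label w)
  | n + 1, G, w =>
    (fun p => decide (p ∈ G.label w),
     ∑ u ∈ G.adj w, Finsupp.single (typeOf n G u) 1,
     (G.adj w).card)

noncomputable def nbhdF (n : ℕ) (G : LGraph α) (w : G.V) : FullTD α n →₀ ℕ :=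
  ∑ u ∈ G.adj w, Finsupp.single (typeOf n G u) 1

lemma typeOf_succ (n : ℕ) (G : LGraph α) (w : G.V) :
    typeOf (n + 1) G w =
      ((fun p => decide (p ∈ G.label w)), nbhdF n G w, (G.adj w).card) := rfl

lemma nbhdF_apply (n : ℕ) (G : LGraph α) (w : G.V) (τ : FullTD α n) :
    nbhdF n G w τ = ((G.adj w).filter (fun u => typeOf n G u = τ)).card := by
  rw [nbhdF, Finset.card_filter]
  rw [Finsupp.finset_sum_apply]
  refine Finset.sum_congr rfl fun u _ => ?_
  rw [Finsupp.single_apply]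

lemma mem_nbhdF_support {n : ℕ} {G : LGraph α} {w u : G.V} (hu : u ∈ G.adj w) :
    typeOf n G u ∈ (nbhdF n G w).support := by
  rw [Finsupp.mem_support_iff, nbhdF_apply]
  have : u ∈ (G.adj w).filter (fun v => typeOf n G v = typeOf n G u) :=
    Finset.mem_filter.2 ⟨hu, rfl⟩
  have := Finset.card_pos.2 ⟨u, this⟩
  omega

lemma card_filter_type (n : ℕ) (G : LGraph α) (w : G.V) (p : FullTD α n → Prop)
    {s : Finset (FullTD α n)} (hs : (nbhdF n G w).support ⊆ s) :
    ((G.adj w).filter (fun u => p (typeOf n G u))).card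
      = ∑ τ ∈ s, if p τ then nbhdF n G w τ else 0 := by
  have : ∀ τ ∈ s, (if p τ then nbhdF n G w τ else 0)
      = ∑ u ∈ G.adj w, if τ = typeOf n G u then (if p τ then 1 else 0) else 0 := by
    intro τ _
    by_cases hp : p τ
    · rw [if_pos hp, nbhdF_apply, Finset.card_filter]
      refine Finset.sum_congr rfl fun u _ => ?_
      by_cases h : typeOf n G u = τ
      · rw [if_pos h, if_pos h.symm, if_pos hp]
      · rw [if_neg h, if_neg (fun hh : τ = typeOf n G u => h hh.symm)]
    · rw [if_neg hp]
      exact (Finset.sum_eq_zero fun u _ => by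
        by_cases h : τ = typeOf n G u
        · rw [if_pos h, if_neg hp]
        · rw [if_neg h]).symm
  rw [Finset.sum_congr rfl this, Finset.sum_comm, Finset.card_filter]
  refine Finset.sum_congr rfl fun u hu => ?_
  rw [Finset.sum_ite_eq' s (typeOf n G u) (fun τ => if p τ then 1 else 0)]
  simp [hs (mem_nbhdF_support hu)]

lemma card_adj_eq_sum {n : ℕ} (G : LGraph α) (w : G.V)
    {s : Finset (FullTD α n)} (hs : (nbhdF n G w).support ⊆ s) :
    (G.adj w).card = ∑ τ ∈ s, nbhdF n G w τ := by
  have := card_filter_type n G w (fun _ => True) hs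
  simpa using this

lemma sat_bigAnd (G : LGraph α) (l : List (GML α)) (w : G.V) :
    GML.sat G (bigAnd l) w ↔ ∀ ψ ∈ l, GML.sat G ψ w := by
  induction l with
  | nil => simp [bigAnd, GML.sat]
  | cons φ l ih => simp [bigAnd, GML.sat, ih]

lemma sat_dia_iff (G : LGraph α) (k : ℕ) (φ : GML α) (w : G.V) :
    GML.sat G (.dia k φ) w ↔ k ≤ ((G.adj w).filter (fun u => GML.sat G φ u)).card := by
  constructor
  · rintro ⟨s, hs, hk, hsat⟩
    exact hk.trans (Finset.card_le_card (fun u hu => Finset.mem_filter.2 ⟨hs hu, hsat u hu⟩))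
  · intro h
    exact ⟨_, Finset.filter_subset _ _, h, fun u hu => (Finset.mem_filter.1 hu).2⟩

lemma sat_diaEq_iff (G : LGraph α) (k : ℕ) (φ : GML α) (w : G.V) :
    GML.sat G (GML.diaEq k φ) w ↔ ((G.adj w).filter (fun u => GML.sat G φ u)).card = k := by
  rw [GML.diaEq]
  show GML.sat G (.dia k φ) w ∧ ¬ GML.sat G (.dia (k+1) φ) w ↔ _
  rw [sat_dia_iff, sat_dia_iff]
  omega

lemma sat_baseFormula (G : LGraph α) (t : α → Bool) (w : G.V) :
    GML.sat G (baseFormula t) w ↔ t = fun p => decide (p ∈ G.label w) := by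
  rw [baseFormula, sat_bigAnd]
  simp only [List.mem_map, Finset.mem_toList, Finset.mem_univ, true_and]
  constructor
  · intro h
    funext p
    have hp := h _ ⟨p, rfl⟩
    cases ht : t p with
    | true =>
      rw [ht, if_pos rfl] at hp
      exact (decide_eq_true (hp : p ∈ G.label w)).symm
    | false =>
      rw [ht] at hp
      simp only [Bool.false_eq_true, if_false] at hp
      exact (decide_eq_false (hp : ¬ p ∈ G.label w)).symm
  · rintro rfl ψ ⟨p, rfl⟩
    show GML.sat G (if decide (p ∈ G.label w) = true then GML.lab p else (GML.lab p).neg) w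
    by_cases hp : p ∈ G.label w
    · rw [if_pos (decide_eq_true hp)]
      exact hp
    · rw [if_neg (fun h => hp (of_decide_eq_true h))]
      exact (hp : ¬ p ∈ G.label w)

/-- Joint: a node satisfies its own type formula, and satisfying a realized type
formula forces the type. -/
lemma sat_typeOf : ∀ (n : ℕ) (G : LGraph α) (w : G.V),
    GML.sat G (FullTD.toFormula (typeOf n G w)) w ∧
    ∀ (G' : LGraph α) (w' : G'.V),
      GML.sat G' (FullTD.toFormula (typeOf n G w)) w' → typeOf n G' w' = typeOf n G w := by
  intro n
  induction n with
  | zero =>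
    intro G w
    constructor
    · exact (sat_baseFormula G _ w).2 rfl
    · intro G' w' h
      replace h := (sat_baseFormula G' (typeOf 0 G w) w').1 h
      show (fun p => decide (p ∈ G'.label w')) = _
      rw [← h]
  | succ n ih =>
    intro G w
    -- key: for any realized τ, sat of τ.toFormula characterizes having type τ
    have key : ∀ (τ : FullTD α n), τ ∈ (nbhdF n G w).support →
        ∀ (G' : LGraph α) (u : G'.V),
          GML.sat G' (FullTD.toFormula τ) u ↔ typeOf n G' u = τ := by
      intro τ hτ G' u
      rw [Finsupp.mem_support_iff, nbhdF_apply] at hτ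
      obtain ⟨u₀, hu₀⟩ := Finset.card_pos.1 (Nat.pos_of_ne_zero hτ)
      obtain ⟨hu₀adj, rfl⟩ := Finset.mem_filter.1 hu₀
      constructor
      · exact (ih G u₀).2 G' u
      · rintro h; rw [← h]; exact (ih G' u).1
    constructor
    · rw [typeOf_succ]
      show GML.sat G (.and (baseFormula _) (.and (bigAnd _) (GML.diaEq _ .top))) w
      refine ⟨(sat_baseFormula G _ w).2 rfl, ?_, ?_⟩
      · rw [sat_bigAnd]
        rintro ψ hψ
        simp only [List.mem_map, Finset.mem_toList] at hψ
        obtain ⟨τ, hτ, rfl⟩ := hψ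
        rw [sat_diaEq_iff, nbhdF_apply]
        congr 1
        exact Finset.filter_congr fun u _ => key τ hτ G u
      · rw [sat_diaEq_iff]
        have hfil : Finset.filter (fun u => GML.sat G GML.top u) (G.adj w) = G.adj w :=
          Finset.filter_true_of_mem (fun u _ => True.intro)
        rw [hfil]
    · intro G' w' h
      rw [typeOf_succ] at h ⊢
      obtain ⟨hbase, hcnt, htot⟩ :
          GML.sat G' (baseFormula _) w' ∧ GML.sat G' (bigAnd _) w' ∧
            GML.sat G' (GML.diaEq (G.adj w).card .top) w' := h
      rw [sat_baseFormula] at hbase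
      rw [sat_diaEq_iff] at htot
      have hfil : Finset.filter (fun u => GML.sat G' GML.top u) (G'.adj w') = G'.adj w' :=
        Finset.filter_true_of_mem (fun u _ => True.intro)
      rw [hfil] at htot
      -- counts agree on support of nbhdF n G w
      have hcount : ∀ τ ∈ (nbhdF n G w).support, nbhdF n G' w' τ = nbhdF n G w τ := by
        intro τ hτ
        rw [sat_bigAnd] at hcnt
        have := hcnt (GML.diaEq (nbhdF n G w τ) (FullTD.toFormula τ))
          (by simp only [List.mem_map, Finset.mem_toList]; exact ⟨τ, hτ, rfl⟩)
        rw [sat_diaEq_iff] at this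
        rw [nbhdF_apply, ← this]
        congr 1
        exact Finset.filter_congr fun u _ => (key τ hτ G' u).symm
      have hF : nbhdF n G' w' = nbhdF n G w := by
        set s := (nbhdF n G w).support ∪ (nbhdF n G' w').support with hs
        have hsub1 : (nbhdF n G w).support ⊆ s := Finset.subset_union_left
        have hsub2 : (nbhdF n G' w').support ⊆ s := Finset.subset_union_right
        have hsum : ∑ τ ∈ s, nbhdF n G w τ = ∑ τ ∈ s, nbhdF n G' w' τ := by
          rw [← card_adj_eq_sum G w hsub1, ← card_adj_eq_sum G' w' hsub2, htot]
        have hle : ∀ τ ∈ s, nbhdF n G w τ ≤ nbhdF n G' w' τ := by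
          intro τ hτs
          by_cases hτ : τ ∈ (nbhdF n G w).support
          · exact (hcount τ hτ).ge
          · rw [Finsupp.notMem_support_iff.1 hτ]; exact Nat.zero_le _
        have := (Finset.sum_eq_sum_iff_of_le hle).1 hsum
        ext τ
        by_cases hτs : τ ∈ s
        · exact (this τ hτs).symm
        · rw [Finsupp.notMem_support_iff.1 (fun h => hτs (hsub2 h)),
            Finsupp.notMem_support_iff.1 (fun h => hτs (hsub1 h))]
      exact Prod.ext hbase.symm (Prod.ext hF htot)

/-- Nodes of equal full type of depth `n` satisfy the same formulas of depth ≤ `n`. -/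
lemma sat_congr_of_typeOf_eq :
    ∀ (φ : GML α) (n : ℕ) (G : LGraph α) (w : G.V) (G' : LGraph α) (w' : G'.V),
      φ.mdepth ≤ n → typeOf n G w = typeOf n G' w' →
      (GML.sat G φ w ↔ GML.sat G' φ w') := by
  intro φ
  induction φ with
  | top => intro n G w G' w' _ _; exact Iff.rfl
  | lab p =>
    intro n G w G' w' _ h
    have hb : (fun q => decide (q ∈ G.label w)) = (fun q => decide (q ∈ G'.label w')) := by
      cases n with
      | zero => exact h
      | succ n => exact congrArg Prod.fst h
    have := congrFun hb p
    show p ∈ G.label w ↔ p ∈ G'.label w'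
    simpa using this
  | neg φ ih =>
    intro n G w G' w' hd h
    exact not_congr (ih n G w G' w' hd h)
  | and φ ψ ihφ ihψ =>
    intro n G w G' w' hd h
    rw [GML.mdepth, max_le_iff] at hd
    exact and_congr (ihφ n G w G' w' hd.1 h) (ihψ n G w G' w' hd.2 h)
  | dia k φ ih =>
    intro n G w G' w' hd h
    rw [GML.mdepth] at hd
    cases n with
    | zero => omega
    | succ n =>
      have hdφ : φ.mdepth ≤ n := by omega
      have hF : nbhdF n G w = nbhdF n G' w' := congrArg (fun t => t.2.1) h
      set Q : FullTD α n → Prop :=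
        fun τ => ∃ (G₀ : LGraph α) (u₀ : G₀.V), typeOf n G₀ u₀ = τ ∧ GML.sat G₀ φ u₀ with hQ
      have hchar : ∀ (G₀ : LGraph α) (u : G₀.V), GML.sat G₀ φ u ↔ Q (typeOf n G₀ u) := by
        intro G₀ u
        constructor
        · intro hs; exact ⟨G₀, u, rfl, hs⟩
        · rintro ⟨G₁, u₁, ht, hs⟩
          exact (ih n G₁ u₁ G₀ u hdφ (ht ▸ rfl)).1 hs
      rw [sat_dia_iff, sat_dia_iff]
      have e1 : ((G.adj w).filter (fun u => GML.sat G φ u)).card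
          = ∑ τ ∈ (nbhdF n G w).support, if Q τ then nbhdF n G w τ else 0 := by
        rw [Finset.filter_congr (fun u _ => hchar G u)]
        exact card_filter_type n G w Q (Finset.Subset.refl _)
      have e2 : ((G'.adj w').filter (fun u => GML.sat G' φ u)).card
          = ∑ τ ∈ (nbhdF n G' w').support, if Q τ then nbhdF n G' w' τ else 0 := by
        rw [Finset.filter_congr (fun u _ => hchar G' u)]
        exact card_filter_type n G' w' Q (Finset.Subset.refl _)
      rw [e1, e2, hF]

end Aux

/-- Every GML formula of modal depth (at most) `n` is logically equivalent
over finite pointed `α`-labeled graphs to an at most countable disjunction of full graded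
`α`-types of modal depth `n`. -/
theorem gml_equivalent_to_countable_disjunction_of_full_types
    {α : Type} [Fintype α] [DecidableEq α] (n : ℕ) (φ : GML α) (hd : φ.mdepth ≤ n) :
    ∃ T : Set (FullTD α n), T.Countable ∧ ∀ (G : LGraph α) (w : G.V),
      GML.sat G φ w ↔ ∃ τ ∈ T, GML.sat G (FullTD.toFormula τ) w := by
  classical
  refine ⟨{τ | ∃ (G : LGraph α) (w : G.V), typeOf n G w = τ ∧ GML.sat G φ w},
    Set.to_countable _, ?_⟩
  intro G w
  constructor
  · intro h
    exact ⟨typeOf n G w, ⟨G, w, rfl, h⟩, (sat_typeOf n G w).1⟩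
  · rintro ⟨τ, ⟨G', w', rfl, hφ⟩, hsat⟩
    have heq : typeOf n G w = typeOf n G' w' := (sat_typeOf n G' w').2 G w hsat
    exact (sat_congr_of_typeOf_eq φ n G w G' w' hd heq).2 hφ
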